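/- Let A, B, C be a partition of the n vertices with |A ∪ B| ≤ n^{1/8}, and let Ω(n) be the set of pairs (τ, ψ) of spin and weight configurations with |Σ_{u∈C} ψ_u τ_u| ≤ n^{3/4} (spins valued in ±1, weights in [φ_min, φ_max]). Then, uniformly over (τ, ψ) ∈ Ω(n) and over graphs g having no edges between A and C, Q_{A,C}(g, τ, ψ) = (1 + o_n(1)) · exp(-((a+b)/(2n)) · ‖A‖·‖C‖), where ‖U‖ = Σ_{u∈U} ψ_u and Q_{A,C}(g,τ,ψ) = Π_{u∈A, v∈C, τ_u=τ_v}(1 - a·ψ_uψ_v/n) · Π_{u∈A, v∈C, τ_u≠τ_v}(1 - b·ψ_uψ_v/n). -/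

import Mathlib

noncomputable section

open Finset

/-- `Q_{A,C}(τ,ψ)`: the product over pairs `u ∈ A`, `v ∈ C` of the non-edge factors
`1 - a ψ_u ψ_v / n` (if `τ_u = τ_v`) or `1 - b ψ_u ψ_v / n` (if `τ_u ≠ τ_v`), valid when the
graph has no `A`–`C` edges. -/
def QAC (a b : ℝ) (n : ℕ) (A C : Finset (Fin n)) (τ : Fin n → Bool) (ψ : Fin n → ℝ) : ℝ :=
  ∏ u ∈ A, ∏ v ∈ C,
    (if τ u = τ v then 1 - a * ψ u * ψ v / n else 1 - b * ψ u * ψ v / n)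

/-- The spin `τ_u` identified with `±1`. -/
def sgn {n : ℕ} (τ : Fin n → Bool) (u : Fin n) : ℝ := if τ u = true then 1 else -1

private lemma exp_le_one_sub_aux {x : ℝ} (h0 : 0 ≤ x) (h1 : x ≤ 1/4) :
    Real.exp (-(x + x^2)) ≤ 1 - x := by
  have ht : (0:ℝ) ≤ (x + x^2)/2 := by positivity
  have h2 : (x + x^2)/2 + 1 ≤ Real.exp ((x + x^2)/2) := Real.add_one_le_exp _
  have h3 : ((x + x^2)/2 + 1)^2 ≤ Real.exp (x + x^2) := by
    have hpos := Real.exp_pos ((x+x^2)/2)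
    calc ((x + x^2)/2 + 1)^2 ≤ (Real.exp ((x + x^2)/2))^2 := by nlinarith
      _ = Real.exp (x + x^2) := by rw [sq, ← Real.exp_add]; ring_nf
  have key : 1 ≤ (1 - x) * Real.exp (x + x^2) := by
    have h4 : x^3 ≤ x^2 * (1/4) := by nlinarith
    have h5 : x^4 ≤ x^2 * (1/16) := by nlinarith
    have h6 : x^5 ≤ x^2 * (1/64) := by nlinarith
    have h7 : (1 - x) * ((x + x^2)/2 + 1)^2 ≤ (1 - x) * Real.exp (x + x^2) :=
      mul_le_mul_of_nonneg_left h3 (by linarith)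
    nlinarith [sq_nonneg x]
  rw [Real.exp_neg, inv_eq_one_div, div_le_iff₀ (Real.exp_pos _)]
  linarith

set_option maxHeartbeats 1600000

/-- **Uniform asymptotics of the interaction term `Q_{A,C}`.**
Let `A, B, C` partition the `n` vertices with `|A ∪ B| ≤ n^{1/8}`, and let `Ω(n)` be the set of
spin/weight configurations `(τ, ψ)` with `|∑_{u∈C} ψ_u τ_u| ≤ n^{3/4}` (spins in `±1`, weights
in `[φmin, φmax]`).  Then, uniformly over `(τ,ψ) ∈ Ω(n)` (and over graphs with no `A`–`C`
edges, on which `Q_{A,C}` does not depend),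
`Q_{A,C}(τ,ψ) = (1 + o_n(1)) · exp(-((a+b)/(2n))·‖A‖·‖C‖)` where `‖U‖ = ∑_{u∈U} ψ_u`. -/
theorem stmt16
    (a b φmin φmax : ℝ) (ha : 0 < a) (hb : 0 < b)
    (hφmin : 0 < φmin) (hφ : φmin ≤ φmax) :
    ∀ ε : ℝ, 0 < ε → ∃ N : ℕ, ∀ n : ℕ, N ≤ n →
      ∀ A B C : Finset (Fin n),
        Disjoint A B → Disjoint A C → Disjoint B C → A ∪ B ∪ C = Finset.univ →
        ((A ∪ B).card : ℝ) ≤ (n : ℝ) ^ ((1 : ℝ) / 8) →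
        ∀ (τ : Fin n → Bool) (ψ : Fin n → ℝ),
          (∀ u, ψ u ∈ Set.Icc φmin φmax) →
          |∑ u ∈ C, ψ u * sgn τ u| ≤ (n : ℝ) ^ ((3 : ℝ) / 4) →
          |QAC a b n A C τ ψ /
              Real.exp (-((a + b) / (2 * n)) * (∑ u ∈ A, ψ u) * (∑ u ∈ C, ψ u)) - 1| ≤ ε := by
  intro ε hε
  have hφmax : 0 < φmax := lt_of_lt_of_le hφmin hφ
  set K : ℝ := max a b * φmax^2 with hKdef
  have hK : 0 < K := mul_pos (lt_max_of_lt_left ha) (by positivity)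
  set C₂ : ℝ := |a - b| * φmax / 2 + K^2 with hC₂def
  have hC₂ : 0 ≤ C₂ := by positivity
  set δ : ℝ := min 1 (ε/3) with hδdef
  have hδ : 0 < δ := lt_min one_pos (by linarith)
  have hδ1 : δ ≤ 1 := min_le_left _ _
  have hδε : δ ≤ ε/3 := min_le_right _ _
  clear_value K C₂ δ
  obtain ⟨N, hN⟩ := exists_nat_ge (max (4*K + 1) ((C₂/δ)^8))
  refine ⟨N, ?_⟩
  intro n hn A B C hAB hAC hBC hunion hcard τ ψ hψ hΩ
  have hnR : (max (4*K+1) ((C₂/δ)^8)) ≤ (n:ℝ) := le_trans hN (Nat.cast_le.mpr hn)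
  have hn1 : 4*K + 1 ≤ (n:ℝ) := le_trans (le_max_left _ _) hnR
  have hn8 : (C₂/δ)^8 ≤ (n:ℝ) := le_trans (le_max_right _ _) hnR
  have hn0 : (0:ℝ) < n := by linarith
  have hnge1 : (1:ℝ) ≤ n := by linarith
  have hne : (n:ℝ) ≠ 0 := ne_of_gt hn0
  have hψpos : ∀ u, 0 < ψ u := fun u => lt_of_lt_of_le hφmin (hψ u).1
  set x : Fin n → Fin n → ℝ := fun u v => (if τ u = τ v then a else b) * ψ u * ψ v / n
    with hxdef
  have hx0 : ∀ u v, 0 ≤ x u v := by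
    intro u v
    have hc : 0 < (if τ u = τ v then a else b) := by split <;> assumption
    have h1 := hψpos u
    have h2 := hψpos v
    apply div_nonneg _ hn0.le
    exact mul_nonneg (mul_nonneg hc.le h1.le) h2.le
  have hxK : ∀ u v, x u v ≤ K / n := by
    intro u v
    have hc : (if τ u = τ v then a else b) ≤ max a b := by
      split
      · exact le_max_left a b
      · exact le_max_right a b
    have hc0 : (0:ℝ) < (if τ u = τ v then a else b) := by split <;> assumption
    have hnum : (if τ u = τ v then a else b) * ψ u * ψ v ≤ K := by
      have h1 := (hψ u).2
      have h2 := (hψ v).2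
      have h3 := hψpos u
      have h4 := hψpos v
      calc (if τ u = τ v then a else b) * ψ u * ψ v ≤ max a b * φmax * φmax := by
            apply mul_le_mul _ h2 h4.le (by positivity)
            exact mul_le_mul hc h1 h3.le (le_trans ha.le (le_max_left a b))
        _ = K := by rw [hKdef]; ring
    show (if τ u = τ v then a else b) * ψ u * ψ v / n ≤ K / n
    gcongr
  have hxq : ∀ u v, x u v ≤ 1/4 := by
    intro u v
    refine le_trans (hxK u v) ?_
    rw [div_le_iff₀ hn0]
    linarith
  -- Q as product of (1 - x u v)
  have hQeq : QAC a b n A C τ ψ = ∏ u ∈ A, ∏ v ∈ C, (1 - x u v) := by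
    unfold QAC
    refine prod_congr rfl fun u _ => prod_congr rfl fun v _ => ?_
    by_cases h : τ u = τ v <;> simp [hxdef, h]
  set S := ∑ u ∈ A, ∑ v ∈ C, x u v with hSdef
  set T := ∑ u ∈ A, ∑ v ∈ C, (x u v)^2 with hTdef
  clear_value S T
  have hT0 : 0 ≤ T := by
    rw [hTdef]
    apply Finset.sum_nonneg; intro u _; apply Finset.sum_nonneg; intro v _; positivity
  -- upper bound on Q
  have hQub : QAC a b n A C τ ψ ≤ Real.exp (-S) := by
    rw [hQeq]
    calc ∏ u ∈ A, ∏ v ∈ C, (1 - x u v)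
        ≤ ∏ u ∈ A, ∏ v ∈ C, Real.exp (-(x u v)) := by
          apply Finset.prod_le_prod
          · intro u _; apply Finset.prod_nonneg; intro v _; linarith [hxq u v]
          · intro u _
            apply Finset.prod_le_prod
            · intro v _; linarith [hxq u v]
            · intro v _; linarith [Real.add_one_le_exp (-(x u v))]
      _ = ∏ u ∈ A, Real.exp (∑ v ∈ C, -(x u v)) := by
          refine prod_congr rfl fun u _ => (Real.exp_sum _ _).symm
      _ = Real.exp (∑ u ∈ A, ∑ v ∈ C, -(x u v)) := (Real.exp_sum _ _).symm
      _ = Real.exp (-S) := by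
          congr 1
          simp [hSdef, Finset.sum_neg_distrib]
  -- lower bound on Q
  have hQlb : Real.exp (-S - T) ≤ QAC a b n A C τ ψ := by
    rw [hQeq]
    calc Real.exp (-S - T)
        = Real.exp (∑ u ∈ A, ∑ v ∈ C, -(x u v + (x u v)^2)) := by
          congr 1
          simp only [neg_add, Finset.sum_add_distrib, Finset.sum_neg_distrib, hSdef, hTdef]
          ring
      _ = ∏ u ∈ A, Real.exp (∑ v ∈ C, -(x u v + (x u v)^2)) := Real.exp_sum _ _
      _ = ∏ u ∈ A, ∏ v ∈ C, Real.exp (-(x u v + (x u v)^2)) := by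
          refine prod_congr rfl fun u _ => Real.exp_sum _ _
      _ ≤ ∏ u ∈ A, ∏ v ∈ C, (1 - x u v) := by
          apply Finset.prod_le_prod
          · intro u _; apply Finset.prod_nonneg; intro v _; positivity
          · intro u _
            apply Finset.prod_le_prod
            · intro v _; positivity
            · intro v _; exact exp_le_one_sub_aux (hx0 u v) (hxq u v)
  -- exact computation of S
  have hpoint : ∀ u v, x u v = (a+b)/(2*n) * (ψ u * ψ v)
      + (a-b)/(2*n) * ((ψ u * sgn τ u) * (ψ v * sgn τ v)) := by
    intro u v
    cases hu : τ u <;> cases hv : τ v <;>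
      simp [hxdef, sgn, hu, hv] <;> field_simp <;> ring
  have e1 : ∀ (c : ℝ) (f g : Fin n → ℝ),
      c * (∑ u ∈ A, f u) * (∑ v ∈ C, g v) = ∑ u ∈ A, ∑ v ∈ C, c * (f u * g v) := by
    intro c f g
    rw [mul_assoc, Finset.sum_mul_sum, Finset.mul_sum]
    exact Finset.sum_congr rfl fun u _ => Finset.mul_sum _ _ _
  have hS : S = (a+b)/(2*n) * (∑ u ∈ A, ψ u) * (∑ v ∈ C, ψ v)
      + (a-b)/(2*n) * (∑ u ∈ A, ψ u * sgn τ u) * (∑ v ∈ C, ψ v * sgn τ v) := by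
    rw [hSdef, e1, e1, ← Finset.sum_add_distrib]
    refine Finset.sum_congr rfl fun u _ => ?_
    rw [← Finset.sum_add_distrib]
    exact Finset.sum_congr rfl fun v _ => hpoint u v
  -- cardinality bounds
  have hcardA : (A.card : ℝ) ≤ (n:ℝ) ^ ((1:ℝ)/8) := by
    refine le_trans ?_ hcard
    exact_mod_cast Finset.card_le_card Finset.subset_union_left
  have hcardC : (C.card : ℝ) ≤ (n:ℝ) := by
    have := Finset.card_le_univ C
    simp only [Finset.card_univ, Fintype.card_fin] at this
    exact_mod_cast this
  -- bound on ∑_A ψ sgn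
  have hSA : |∑ u ∈ A, ψ u * sgn τ u| ≤ φmax * A.card := by
    calc |∑ u ∈ A, ψ u * sgn τ u| ≤ ∑ u ∈ A, |ψ u * sgn τ u| :=
          Finset.abs_sum_le_sum_abs _ _
      _ = ∑ u ∈ A, ψ u := by
          refine Finset.sum_congr rfl fun u _ => ?_
          have hsg : |sgn τ u| = 1 := by unfold sgn; split <;> simp
          rw [abs_mul, hsg, mul_one, abs_of_pos (hψpos u)]
      _ ≤ ∑ _u ∈ A, φmax := Finset.sum_le_sum fun u _ => (hψ u).2
      _ = φmax * A.card := by rw [Finset.sum_const, nsmul_eq_mul]; ring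
  -- bound on T
  have hTbound : T ≤ (A.card : ℝ) * C.card * (K/n)^2 := by
    rw [hTdef]
    calc (∑ u ∈ A, ∑ v ∈ C, (x u v)^2) ≤ ∑ u ∈ A, (C.card : ℝ) * (K/n)^2 := by
          refine Finset.sum_le_sum fun u _ => ?_
          calc ∑ v ∈ C, (x u v)^2 ≤ ∑ _v ∈ C, (K/n)^2 :=
                Finset.sum_le_sum fun v _ => pow_le_pow_left₀ (hx0 u v) (hxK u v) 2
            _ = (C.card : ℝ) * (K/n)^2 := by rw [Finset.sum_const, nsmul_eq_mul]
      _ = (A.card : ℝ) * C.card * (K/n)^2 := by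
          rw [Finset.sum_const, nsmul_eq_mul]; ring
  -- rpow arithmetic
  have h78 : (n:ℝ) ^ ((1:ℝ)/8) * (n:ℝ) ^ ((3:ℝ)/4) = (n:ℝ) ^ ((7:ℝ)/8) := by
    rw [← Real.rpow_add hn0]; norm_num
  have h88 : (n:ℝ) ^ ((7:ℝ)/8) * (n:ℝ) ^ ((1:ℝ)/8) = (n:ℝ) := by
    rw [← Real.rpow_add hn0]; norm_num
  have hrpos : (0:ℝ) < (n:ℝ) ^ ((7:ℝ)/8) := Real.rpow_pos_of_pos hn0 _
  have hrpos18 : (0:ℝ) < (n:ℝ) ^ ((1:ℝ)/8) := Real.rpow_pos_of_pos hn0 _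
  have hr18le : (n:ℝ) ^ ((1:ℝ)/8) ≤ (n:ℝ) ^ ((7:ℝ)/8) :=
    Real.rpow_le_rpow_of_exponent_le hnge1 (by norm_num)
  -- C₂ ≤ δ n^{1/8}
  have hmain : C₂ ≤ δ * (n:ℝ) ^ ((1:ℝ)/8) := by
    have hm0 : (0:ℝ) ≤ C₂/δ := div_nonneg hC₂ hδ.le
    have h2 : ((C₂/δ)^(8:ℕ)) ^ ((1:ℝ)/8) ≤ (n:ℝ) ^ ((1:ℝ)/8) :=
      Real.rpow_le_rpow (by positivity) hn8 (by norm_num)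
    rw [← Real.rpow_natCast (C₂/δ) 8, ← Real.rpow_mul hm0,
      show ((8:ℕ):ℝ) * ((1:ℝ)/8) = 1 by norm_num, Real.rpow_one] at h2
    calc C₂ = (C₂/δ) * δ := by field_simp
      _ ≤ (n:ℝ) ^ ((1:ℝ)/8) * δ := mul_le_mul_of_nonneg_right h2 hδ.le
      _ = δ * (n:ℝ) ^ ((1:ℝ)/8) := mul_comm _ _
  -- error bound
  set D := (a-b)/(2*n) * (∑ u ∈ A, ψ u * sgn τ u) * (∑ v ∈ C, ψ v * sgn τ v) with hDdef
  clear_value D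
  have hDb : |D| ≤ |a-b| * φmax / 2 * ((n:ℝ) ^ ((7:ℝ)/8) / n) := by
    have h1 : |D| = |a-b|/(2*n) * |∑ u ∈ A, ψ u * sgn τ u| * |∑ v ∈ C, ψ v * sgn τ v| := by
      rw [hDdef, abs_mul, abs_mul, abs_div, abs_of_pos (by linarith : (0:ℝ) < 2*n)]
    rw [h1]
    have hSA' : |∑ u ∈ A, ψ u * sgn τ u| ≤ φmax * (n:ℝ) ^ ((1:ℝ)/8) :=
      hSA.trans (mul_le_mul_of_nonneg_left hcardA hφmax.le)
    calc |a-b|/(2*n) * |∑ u ∈ A, ψ u * sgn τ u| * |∑ v ∈ C, ψ v * sgn τ v|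
        ≤ |a-b|/(2*n) * (φmax * (n:ℝ) ^ ((1:ℝ)/8)) * ((n:ℝ) ^ ((3:ℝ)/4)) := by
          apply mul_le_mul
          · exact mul_le_mul_of_nonneg_left hSA' (by positivity)
          · exact hΩ
          · exact abs_nonneg _
          · positivity
      _ = |a-b| * φmax / 2 * ((n:ℝ) ^ ((1:ℝ)/8) * (n:ℝ) ^ ((3:ℝ)/4) / n) := by ring
      _ = |a-b| * φmax / 2 * ((n:ℝ) ^ ((7:ℝ)/8) / n) := by rw [h78]
  have hTb : T ≤ K^2 * ((n:ℝ) ^ ((7:ℝ)/8) / n) := by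
    calc T ≤ (A.card : ℝ) * C.card * (K/n)^2 := hTbound
      _ ≤ (n:ℝ) ^ ((1:ℝ)/8) * n * (K/n)^2 := by
          apply mul_le_mul_of_nonneg_right _ (by positivity)
          exact mul_le_mul hcardA hcardC (Nat.cast_nonneg _) (by positivity)
      _ = K^2 * ((n:ℝ) ^ ((1:ℝ)/8) / n) := by field_simp
      _ ≤ K^2 * ((n:ℝ) ^ ((7:ℝ)/8) / n) := by
          apply mul_le_mul_of_nonneg_left _ (by positivity)
          gcongr
  have hE : |D| + T ≤ δ := by
    have h1 : |D| + T ≤ C₂ * ((n:ℝ) ^ ((7:ℝ)/8) / n) := by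
      rw [hC₂def]
      calc |D| + T ≤ |a-b| * φmax / 2 * ((n:ℝ) ^ ((7:ℝ)/8) / n)
            + K^2 * ((n:ℝ) ^ ((7:ℝ)/8) / n) := add_le_add hDb hTb
        _ = (|a - b| * φmax / 2 + K^2) * ((n:ℝ) ^ ((7:ℝ)/8) / n) := by ring
    refine h1.trans ?_
    rw [mul_div_assoc', div_le_iff₀ hn0]
    calc C₂ * (n:ℝ) ^ ((7:ℝ)/8) ≤ δ * (n:ℝ) ^ ((1:ℝ)/8) * (n:ℝ) ^ ((7:ℝ)/8) :=
          mul_le_mul_of_nonneg_right hmain hrpos.le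
      _ = δ * ((n:ℝ) ^ ((7:ℝ)/8) * (n:ℝ) ^ ((1:ℝ)/8)) := by ring
      _ = δ * n := by rw [h88]
  -- ratio bounds
  set L : ℝ := -((a + b) / (2 * (n:ℝ))) * (∑ u ∈ A, ψ u) * (∑ u ∈ C, ψ u) with hLdef
  clear_value L
  have hexpL : (0:ℝ) < Real.exp L := Real.exp_pos _
  set R : ℝ := QAC a b n A C τ ψ / Real.exp L with hRdef
  clear_value R
  have hSL : -S - L = -D := by rw [hS, hLdef, hDdef]; ring
  have hRub : R ≤ Real.exp (-D) := by
    calc R ≤ Real.exp (-S) / Real.exp L := by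
          rw [hRdef]; gcongr
      _ = Real.exp (-S - L) := (Real.exp_sub _ _).symm
      _ = Real.exp (-D) := by rw [hSL]
  have hRlb : Real.exp (-D - T) ≤ R := by
    calc Real.exp (-D - T) = Real.exp ((-S - L) - T) := by rw [hSL]
      _ = Real.exp ((-S - T) - L) := by congr 1; ring
      _ = Real.exp (-S - T) / Real.exp L := Real.exp_sub _ _
      _ ≤ R := by rw [hRdef]; gcongr
  have hDabs : -D ≤ |D| := neg_le_abs D
  have hDabs' : -|D| ≤ D := neg_abs_le D
  have hRub' : R ≤ Real.exp δ :=
    hRub.trans (Real.exp_le_exp.mpr (by linarith))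
  have hRlb' : Real.exp (-δ) ≤ R := by
    refine le_trans (Real.exp_le_exp.mpr ?_) hRlb
    linarith [le_abs_self D]
  -- conclude
  clear hQeq hQub hQlb hpoint e1 hS hSA hTbound hDb hTb hSdef hTdef hDdef hLdef hRdef hSL
  clear hΩ hcard hψ hψpos hx0 hxK hxq hxdef x hcardA hcardC hmain hN hnR hn8 hunion hAB hAC hBC
  have hexp1 : Real.exp 1 ≤ 3 := by
    have := Real.exp_one_lt_d9
    linarith
  have hexpδ : Real.exp δ ≤ 3 := le_trans (Real.exp_le_exp.mpr hδ1) hexp1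
  have h1mδ : 1 - δ ≤ Real.exp (-δ) := by
    linarith [Real.add_one_le_exp (-δ)]
  have hexpδ1 : Real.exp δ - 1 ≤ δ * Real.exp δ := by
    have h2 : Real.exp (-δ) * Real.exp δ = 1 := by
      rw [← Real.exp_add]; simp
    have h3 := mul_le_mul_of_nonneg_right h1mδ (Real.exp_pos δ).le
    rw [h2] at h3
    linarith [h3]
  have hub : R - 1 ≤ ε := by
    have h4 : δ * Real.exp δ ≤ δ * 3 := mul_le_mul_of_nonneg_left hexpδ hδ.le
    linarith
  have hlb : 1 - R ≤ ε := by linarith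
  rw [abs_le]
  constructor <;> [linarith; linarith]
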